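/- Let p, q be natural numbers and let i, j, i', j' be natural numbers with i + j = i' + j', j < j', 1 ≤ j, j' ≤ q, 1 ≤ i', and i ≤ p. Then C(p, i−1)·C(q, j)·C(p, i')·C(q, j'−1) > C(p, i'−1)·C(q, j')·C(p, i)·C(q, j−1). Equivalently, for a fixed value of i + j the ratio (C(p,i−1)·C(q,j)) / (C(p,i)·C(q,j−1)) = ((q−j+1)·i) / ((p−i+1)·j) is strictly decreasing in j. -/
import Mathlib


/-- For a fixed value of `i + j`, the ratio `|X_{i-1,j}| / |X_{i,j-1}|`
(where `|X_{i,j}| = C(p,i) * C(q,j)`) is strictly decreasing in `j`,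
stated in cross-multiplied form. -/
theorem stmt_2 (p q i j i' j' : ℕ)
    (hsum : i + j = i' + j') (hjj' : j < j') (hj : 1 ≤ j) (hj'q : j' ≤ q)
    (hi' : 1 ≤ i') (hip : i ≤ p) :
    Nat.choose p (i' - 1) * Nat.choose q j' * Nat.choose p i * Nat.choose q (j - 1) <
      Nat.choose p (i - 1) * Nat.choose q j * Nat.choose p i' * Nat.choose q (j' - 1) := by
  obtain ⟨b, rfl⟩ : ∃ b, i' = b + 1 := ⟨i' - 1, by omega⟩
  obtain ⟨c, rfl⟩ : ∃ c, j = c + 1 := ⟨j - 1, by omega⟩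
  obtain ⟨d, rfl⟩ : ∃ d, j' = d + 1 := ⟨j' - 1, by omega⟩
  obtain ⟨a, rfl⟩ : ∃ a, i = a + 1 := ⟨i - 1, by omega⟩
  simp only [Nat.add_sub_cancel]
  obtain ⟨u, hu, hu1⟩ : ∃ u, p = a + u ∧ 1 ≤ u := ⟨p - a, by omega, by omega⟩
  obtain ⟨v, hv, hv1⟩ : ∃ v, p = b + v ∧ u < v := ⟨p - b, by omega, by omega⟩
  obtain ⟨s, hs, hs1⟩ : ∃ s, q = c + s ∧ 1 ≤ s := ⟨q - c, by omega, by omega⟩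
  obtain ⟨t, ht, ht1⟩ : ∃ t, q = d + t ∧ t < s := ⟨q - d, by omega, by omega⟩
  have h1 : Nat.choose p (a + 1) * (a + 1) = Nat.choose p a * u := by
    rw [Nat.choose_succ_right_eq]; congr 1; omega
  have h2 : Nat.choose q (d + 1) * (d + 1) = Nat.choose q d * t := by
    rw [Nat.choose_succ_right_eq]; congr 1; omega
  have h3 : Nat.choose p (b + 1) * (b + 1) = Nat.choose p b * v := by
    rw [Nat.choose_succ_right_eq]; congr 1; omega
  have h4 : Nat.choose q (c + 1) * (c + 1) = Nat.choose q c * s := by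
    rw [Nat.choose_succ_right_eq]; congr 1; omega
  have hpa : 0 < Nat.choose p a := Nat.choose_pos (by omega)
  have hpb : 0 < Nat.choose p b := Nat.choose_pos (by omega)
  have hqc : 0 < Nat.choose q c := Nat.choose_pos (by omega)
  have hqd : 0 < Nat.choose q d := Nat.choose_pos (by omega)
  have key : (b + 1) * (c + 1) * (u * t) < (a + 1) * (d + 1) * (v * s) := by
    have hb : b + 1 ≤ a + 1 := by omega
    have hc : c + 1 ≤ d + 1 := by omega
    calc (b + 1) * (c + 1) * (u * t) ≤ (a + 1) * (d + 1) * (u * t) := by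
          exact Nat.mul_le_mul (Nat.mul_le_mul hb hc) le_rfl
      _ < (a + 1) * (d + 1) * (v * s) := by
          have : u * t < v * s := by nlinarith
          exact Nat.mul_lt_mul_of_le_of_lt le_rfl this (by positivity)
  -- multiply both sides by M = (a+1)(b+1)(c+1)(d+1)
  have M : 0 < (a + 1) * (b + 1) * (c + 1) * (d + 1) := by positivity
  refine Nat.lt_of_mul_lt_mul_left (a := (a + 1) * (b + 1) * (c + 1) * (d + 1)) ?_
  have K : 0 < Nat.choose p a * Nat.choose p b * Nat.choose q c * Nat.choose q d := by
    positivity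
  calc (a + 1) * (b + 1) * (c + 1) * (d + 1) *
        (Nat.choose p b * Nat.choose q (d + 1) * Nat.choose p (a + 1) * Nat.choose q c)
      = (Nat.choose p a * Nat.choose p b * Nat.choose q c * Nat.choose q d) *
          ((b + 1) * (c + 1) * (u * t)) := by
        rw [show (a + 1) * (b + 1) * (c + 1) * (d + 1) *
            (Nat.choose p b * Nat.choose q (d + 1) * Nat.choose p (a + 1) * Nat.choose q c)
          = (Nat.choose p (a + 1) * (a + 1)) * (Nat.choose q (d + 1) * (d + 1)) *
            (Nat.choose p b * Nat.choose q c * ((b + 1) * (c + 1))) by ring, h1, h2]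
        ring
    _ < (Nat.choose p a * Nat.choose p b * Nat.choose q c * Nat.choose q d) *
          ((a + 1) * (d + 1) * (v * s)) := (mul_lt_mul_iff_right₀ K).mpr key
    _ = (a + 1) * (b + 1) * (c + 1) * (d + 1) *
        (Nat.choose p a * Nat.choose q (c + 1) * Nat.choose p (b + 1) * Nat.choose q d) := by
        rw [show (a + 1) * (b + 1) * (c + 1) * (d + 1) *
            (Nat.choose p a * Nat.choose q (c + 1) * Nat.choose p (b + 1) * Nat.choose q d)
          = (Nat.choose p (b + 1) * (b + 1)) * (Nat.choose q (c + 1) * (c + 1)) *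
            (Nat.choose p a * Nat.choose q d * ((a + 1) * (d + 1))) by ring, h3, h4]
        ring
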